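/- Let s be an even positive integer with s ≤ n+1. Define φ : S^(2n+1) × S³ → S^(2n+1) × S³ (spheres in ℂ^(n+1) × ℂ²) by φ(w,z) = (z̄₁w₁ + z₂w̄₂, −z₂w̄₁ + z̄₁w₂, …, −z₂w̄_(s−1) + z̄₁wₛ, w̄_(s+1), …, w̄_(n+1), z̄₁, z̄₂). Then φ is a well-defined homeomorphism, and for the T²-action μ(t₁,t₂)·(w,z) = (t₁t₂w₁,…,t₁t₂wₛ, t₁w_(s+1),…,t₁w_(n+1), t₁²t₂z₁, t₂z₂) and the action μ'(t₁,t₂)·(w,z) = (t₁w₁,…,t₁w_(n+1), t₁²t₂z₁, t₂z₂), one has φ(μ(t₁,t₂)·x) = μ'(t₁^(−1), t₂^(−1))·φ(x). -/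

import Mathlib

/-- Extend a tuple `w : Fin (n+1) → ℂ` to a function on `ℕ` by zero,
to ease writing shifted indices. -/
noncomputable def extCoord (n : ℕ) (w : Fin (n + 1) → ℂ) (k : ℕ) : ℂ :=
  if h : k < n + 1 then w ⟨k, h⟩ else 0

noncomputable def phi0 (n s : ℕ) (p : (Fin (n + 1) → ℂ) × (Fin 2 → ℂ)) :
    (Fin (n + 1) → ℂ) × (Fin 2 → ℂ) :=
  (fun i : Fin (n + 1) =>
    if i.1 < s then
      (if i.1 % 2 = 0 then
        starRingEnd ℂ (p.2 0) * p.1 i + p.2 1 * starRingEnd ℂ (extCoord n p.1 (i.1 + 1))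
      else
        -(p.2 1) * starRingEnd ℂ (extCoord n p.1 (i.1 - 1)) + starRingEnd ℂ (p.2 0) * p.1 i)
    else starRingEnd ℂ (p.1 i),
   fun j => starRingEnd ℂ (p.2 j))

noncomputable def psi0 (n s : ℕ) (p : (Fin (n + 1) → ℂ) × (Fin 2 → ℂ)) :
    (Fin (n + 1) → ℂ) × (Fin 2 → ℂ) :=
  (fun i : Fin (n + 1) =>
    if i.1 < s then
      (if i.1 % 2 = 0 then
        starRingEnd ℂ (p.2 0) * p.1 i - starRingEnd ℂ (p.2 1) * starRingEnd ℂ (extCoord n p.1 (i.1 + 1))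
      else
        starRingEnd ℂ (p.2 1) * starRingEnd ℂ (extCoord n p.1 (i.1 - 1)) + starRingEnd ℂ (p.2 0) * p.1 i)
    else starRingEnd ℂ (p.1 i),
   fun j => starRingEnd ℂ (p.2 j))

lemma extCoord_lt (n : ℕ) (w : Fin (n + 1) → ℂ) {k : ℕ} (h : k < n + 1) :
    extCoord n w k = w ⟨k, h⟩ := dif_pos h

lemma hzC_of (p : (Fin (n + 1) → ℂ) × (Fin 2 → ℂ))
    (hz : (∑ j, Complex.normSq (p.2 j)) = 1) :
    p.2 0 * starRingEnd ℂ (p.2 0) + p.2 1 * starRingEnd ℂ (p.2 1) = 1 := by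
  have h2 : Complex.normSq (p.2 0) + Complex.normSq (p.2 1) = 1 := by
    simpa [Fin.sum_univ_two] using hz
  rw [Complex.mul_conj, Complex.mul_conj]
  exact_mod_cast congrArg (Complex.ofReal) h2


lemma psi0_phi0 (n s : ℕ) (hse : s % 2 = 0) (hsn : s ≤ n + 1)
    (p : (Fin (n + 1) → ℂ) × (Fin 2 → ℂ))
    (hz : p.2 0 * starRingEnd ℂ (p.2 0) + p.2 1 * starRingEnd ℂ (p.2 1) = 1) :
    psi0 n s (phi0 n s p) = p := by
  ext x
  · by_cases h1 : x.1 < s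
    · rcases Nat.mod_two_eq_zero_or_one x.1 with hp | hp
      · have hi1 : x.1 + 1 < s := by omega
        have hi1n : x.1 + 1 < n + 1 := by omega
        have hxn : x.1 < n + 1 := x.2
        have hodd : ¬((x.1 + 1) % 2 = 0) := by omega
        simp only [psi0, phi0, if_pos h1, if_pos hp, extCoord_lt n _ hi1n, extCoord_lt n _ hxn,
          if_pos hi1, if_neg hodd, Nat.add_sub_cancel, Fin.eta,
          map_add, map_mul, map_neg, Complex.conj_conj]
        linear_combination (p.1 x) * hz
      · have h0 : x.1 - 1 < s := by omega
        have h0n : x.1 - 1 < n + 1 := by omega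
        have heven : (x.1 - 1) % 2 = 0 := by omega
        have hsub : x.1 - 1 + 1 = x.1 := by omega
        have hxn : x.1 < n + 1 := x.2
        have hne : ¬(x.1 % 2 = 0) := by omega
        simp only [psi0, phi0, if_pos h1, if_neg hne, extCoord_lt n _ h0n, extCoord_lt n _ hxn,
          if_pos h0, if_pos heven, hsub, Fin.eta,
          map_add, map_mul, map_neg, Complex.conj_conj]
        linear_combination (p.1 x) * hz
    · simp [psi0, phi0, if_neg h1]
  · simp [psi0, phi0]

lemma phi0_psi0 (n s : ℕ) (hse : s % 2 = 0) (hsn : s ≤ n + 1)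
    (p : (Fin (n + 1) → ℂ) × (Fin 2 → ℂ))
    (hz : p.2 0 * starRingEnd ℂ (p.2 0) + p.2 1 * starRingEnd ℂ (p.2 1) = 1) :
    phi0 n s (psi0 n s p) = p := by
  ext x
  · by_cases h1 : x.1 < s
    · rcases Nat.mod_two_eq_zero_or_one x.1 with hp | hp
      · have hi1 : x.1 + 1 < s := by omega
        have hi1n : x.1 + 1 < n + 1 := by omega
        have hxn : x.1 < n + 1 := x.2
        have hodd : ¬((x.1 + 1) % 2 = 0) := by omega
        simp only [psi0, phi0, if_pos h1, if_pos hp, extCoord_lt n _ hi1n, extCoord_lt n _ hxn,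
          if_pos hi1, if_neg hodd, Nat.add_sub_cancel, Fin.eta,
          map_add, map_mul, map_neg, map_sub, Complex.conj_conj]
        linear_combination (p.1 x) * hz
      · have h0 : x.1 - 1 < s := by omega
        have h0n : x.1 - 1 < n + 1 := by omega
        have heven : (x.1 - 1) % 2 = 0 := by omega
        have hsub : x.1 - 1 + 1 = x.1 := by omega
        have hxn : x.1 < n + 1 := x.2
        have hne : ¬(x.1 % 2 = 0) := by omega
        simp only [psi0, phi0, if_pos h1, if_neg hne, extCoord_lt n _ h0n, extCoord_lt n _ hxn,
          if_pos h0, if_pos heven, hsub, Fin.eta,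
          map_add, map_mul, map_neg, map_sub, Complex.conj_conj]
        linear_combination (p.1 x) * hz
    · simp [psi0, phi0, if_neg h1]
  · simp [psi0, phi0]

lemma pair_normSq (z1 z2 a b : ℂ) (hz : z1 * starRingEnd ℂ z1 + z2 * starRingEnd ℂ z2 = 1) :
    Complex.normSq (starRingEnd ℂ z1 * a + z2 * starRingEnd ℂ b)
      + Complex.normSq (-z2 * starRingEnd ℂ a + starRingEnd ℂ z1 * b)
      = Complex.normSq a + Complex.normSq b := by
  have hC : (starRingEnd ℂ z1 * a + z2 * starRingEnd ℂ b)
        * starRingEnd ℂ (starRingEnd ℂ z1 * a + z2 * starRingEnd ℂ b)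
      + (-z2 * starRingEnd ℂ a + starRingEnd ℂ z1 * b)
        * starRingEnd ℂ (-z2 * starRingEnd ℂ a + starRingEnd ℂ z1 * b)
      = a * starRingEnd ℂ a + b * starRingEnd ℂ b := by
    simp only [map_add, map_mul, map_neg, Complex.conj_conj]
    linear_combination (a * starRingEnd ℂ a + b * starRingEnd ℂ b) * hz
  rw [Complex.mul_conj, Complex.mul_conj, Complex.mul_conj, Complex.mul_conj] at hC
  exact_mod_cast hC

lemma sum_range_pair (m : ℕ) (f : ℕ → ℝ) :
    ∑ k ∈ Finset.range (2 * m), f k = ∑ k ∈ Finset.range m, (f (2 * k) + f (2 * k + 1)) := by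
  induction m with
  | zero => simp
  | succ m ih =>
    have h : 2 * (m + 1) = 2 * m + 1 + 1 := by ring
    rw [Finset.sum_range_succ, ← ih, h, Finset.sum_range_succ, Finset.sum_range_succ, add_assoc]

lemma sum_ext (n : ℕ) (w : Fin (n + 1) → ℂ) :
    ∑ i, Complex.normSq (w i) = ∑ k ∈ Finset.range (n + 1), Complex.normSq (extCoord n w k) := by
  rw [← Fin.sum_univ_eq_sum_range (fun k => Complex.normSq (extCoord n w k))]
  apply Finset.sum_congr rfl
  intro i _
  rw [extCoord_lt n w i.2]

lemma phi0_norm_fst (n s : ℕ) (hse : s % 2 = 0) (hsn : s ≤ n + 1)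
    (p : (Fin (n + 1) → ℂ) × (Fin 2 → ℂ))
    (hz : p.2 0 * starRingEnd ℂ (p.2 0) + p.2 1 * starRingEnd ℂ (p.2 1) = 1) :
    ∑ i, Complex.normSq ((phi0 n s p).1 i) = ∑ i, Complex.normSq (p.1 i) := by
  rw [sum_ext, sum_ext]
  rw [← Finset.sum_range_add_sum_Ico _ hsn, ← Finset.sum_range_add_sum_Ico _ hsn]
  congr 1
  · -- head part
    obtain ⟨m, hm⟩ : ∃ m, s = 2 * m := ⟨s / 2, by omega⟩
    subst hm
    rw [sum_range_pair, sum_range_pair]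
    apply Finset.sum_congr rfl
    intro k hk
    rw [Finset.mem_range] at hk
    have h2k : 2 * k < 2 * m := by omega
    have h2k1 : 2 * k + 1 < 2 * m := by omega
    have h2kn : 2 * k < n + 1 := by omega
    have h2k1n : 2 * k + 1 < n + 1 := by omega
    have hev : (2 * k) % 2 = 0 := by omega
    have hodd : ¬((2 * k + 1) % 2 = 0) := by omega
    rw [extCoord_lt n _ h2kn, extCoord_lt n _ h2k1n, extCoord_lt n _ h2kn, extCoord_lt n _ h2k1n]
    simp only [phi0, if_pos h2k, if_pos h2k1, if_pos hev, if_neg hodd, Nat.add_sub_cancel,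
      extCoord_lt n _ h2kn, extCoord_lt n _ h2k1n]
    exact pair_normSq _ _ _ _ hz
  · -- tail part
    apply Finset.sum_congr rfl
    intro k hk
    rw [Finset.mem_Ico] at hk
    have hkn : k < n + 1 := hk.2
    have hks : ¬(k < s) := by omega
    rw [extCoord_lt n _ hkn, extCoord_lt n _ hkn]
    simp [phi0, if_neg hks]

lemma phi0_continuous (n s : ℕ) : Continuous (phi0 n s) := by
  have hw : ∀ i : Fin (n + 1),
      Continuous fun p : (Fin (n + 1) → ℂ) × (Fin 2 → ℂ) => p.1 i :=
    fun i => (continuous_apply i).comp continuous_fst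
  have hz : ∀ j : Fin 2,
      Continuous fun p : (Fin (n + 1) → ℂ) × (Fin 2 → ℂ) => p.2 j :=
    fun j => (continuous_apply j).comp continuous_snd
  have hconj : Continuous (starRingEnd ℂ) := RCLike.continuous_conj
  have hext : ∀ k : ℕ,
      Continuous fun p : (Fin (n + 1) → ℂ) × (Fin 2 → ℂ) => extCoord n p.1 k := by
    intro k
    by_cases hk : k < n + 1
    · have he : (fun p : (Fin (n + 1) → ℂ) × (Fin 2 → ℂ) => extCoord n p.1 k)
          = fun p => p.1 ⟨k, hk⟩ := funext fun p => extCoord_lt n p.1 hk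
      rw [he]; exact hw _
    · have he : (fun p : (Fin (n + 1) → ℂ) × (Fin 2 → ℂ) => extCoord n p.1 k)
          = fun _ => 0 := funext fun p => dif_neg hk
      rw [he]; exact continuous_const
  apply Continuous.prodMk
  · apply continuous_pi
    intro i
    by_cases h1 : i.1 < s
    · rcases Nat.mod_two_eq_zero_or_one i.1 with hp | hp
      · simp only [phi0, if_pos h1, if_pos hp]
        exact ((hconj.comp (hz 0)).mul (hw i)).add ((hz 1).mul (hconj.comp (hext _)))
      · have hp' : ¬(i.1 % 2 = 0) := by omega
        simp only [phi0, if_pos h1, if_neg hp']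
        exact (((hz 1).neg).mul (hconj.comp (hext _))).add ((hconj.comp (hz 0)).mul (hw i))
    · simp only [phi0, if_neg h1]
      exact hconj.comp (hw i)
  · exact continuous_pi fun j => hconj.comp (hz j)


theorem stmt15 (n s : ℕ) (hs : 0 < s) (hse : Even s) (hsn : s ≤ n + 1)
    (S : Set ((Fin (n + 1) → ℂ) × (Fin 2 → ℂ)))
    (hS : S = {p | (∑ i, Complex.normSq (p.1 i)) = 1 ∧ (∑ j, Complex.normSq (p.2 j)) = 1})
    (φ : ((Fin (n + 1) → ℂ) × (Fin 2 → ℂ)) → ((Fin (n + 1) → ℂ) × (Fin 2 → ℂ)))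
    (hφ : ∀ p, φ p =
      (fun i : Fin (n + 1) =>
        if i.1 < s then
          (if i.1 % 2 = 0 then
            starRingEnd ℂ (p.2 0) * p.1 i + p.2 1 * starRingEnd ℂ (extCoord n p.1 (i.1 + 1))
          else
            -(p.2 1) * starRingEnd ℂ (extCoord n p.1 (i.1 - 1)) + starRingEnd ℂ (p.2 0) * p.1 i)
        else starRingEnd ℂ (p.1 i),
       fun j => starRingEnd ℂ (p.2 j)))
    (μ μ' : Circle → Circle →
      ((Fin (n + 1) → ℂ) × (Fin 2 → ℂ)) → ((Fin (n + 1) → ℂ) × (Fin 2 → ℂ)))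
    (hμ : ∀ t1 t2 p, μ t1 t2 p =
      (fun i => if i.1 < s then ((t1 : ℂ) * (t2 : ℂ)) * p.1 i else (t1 : ℂ) * p.1 i,
       fun j => if j.1 = 0 then ((t1 : ℂ) ^ 2 * (t2 : ℂ)) * p.2 j else (t2 : ℂ) * p.2 j))
    (hμ' : ∀ t1 t2 p, μ' t1 t2 p =
      (fun i => (t1 : ℂ) * p.1 i,
       fun j => if j.1 = 0 then ((t1 : ℂ) ^ 2 * (t2 : ℂ)) * p.2 j else (t2 : ℂ) * p.2 j)) :
    (∃ h : S ≃ₜ S, ∀ x : S, (h x : (Fin (n + 1) → ℂ) × (Fin 2 → ℂ)) = φ x) ∧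
    (∀ (t1 t2 : Circle) (x : (Fin (n + 1) → ℂ) × (Fin 2 → ℂ)),
      φ (μ t1 t2 x) = μ' t1⁻¹ t2⁻¹ (φ x)) := by
  have hse2 : s % 2 = 0 := Nat.even_iff.mp hse
  have hφ0 : φ = phi0 n s := by
    funext p; rw [hφ]; rfl
  subst hS
  constructor
  · -- the homeomorphism
    have hf : Continuous fun p : (Fin (n + 1) → ℂ) × (Fin 2 → ℂ) =>
        ∑ i, Complex.normSq (p.1 i) :=
      continuous_finset_sum _ fun i _ =>
        Complex.continuous_normSq.comp ((continuous_apply i).comp continuous_fst)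
    have hg : Continuous fun p : (Fin (n + 1) → ℂ) × (Fin 2 → ℂ) =>
        ∑ j, Complex.normSq (p.2 j) :=
      continuous_finset_sum _ fun j _ =>
        Complex.continuous_normSq.comp ((continuous_apply j).comp continuous_snd)
    have hclosed : IsClosed {p : (Fin (n + 1) → ℂ) × (Fin 2 → ℂ) |
        (∑ i, Complex.normSq (p.1 i)) = 1 ∧ (∑ j, Complex.normSq (p.2 j)) = 1} :=
      (isClosed_eq hf continuous_const).inter (isClosed_eq hg continuous_const)
    have hb1 : ∀ (m : ℕ) (w : Fin (m + 1) → ℂ), (∑ i, Complex.normSq (w i)) = 1 →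
        ∀ i, ‖w i‖ ≤ 1 := by
      intro m w hw i
      have h1 : Complex.normSq (w i) ≤ 1 := by
        have := Finset.single_le_sum (f := fun i => Complex.normSq (w i))
          (fun i _ => Complex.normSq_nonneg _) (Finset.mem_univ i)
        rw [hw] at this; exact this
      rw [Complex.normSq_eq_norm_sq] at h1
      nlinarith [norm_nonneg (w i)]
    have hbdd : Bornology.IsBounded {p : (Fin (n + 1) → ℂ) × (Fin 2 → ℂ) |
        (∑ i, Complex.normSq (p.1 i)) = 1 ∧ (∑ j, Complex.normSq (p.2 j)) = 1} := by
      apply Bornology.IsBounded.subset (Metric.isBounded_closedBall (x := 0) (r := 1))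
      intro p hp
      rw [Metric.mem_closedBall, dist_zero_right, Prod.norm_def]
      apply max_le
      · rw [pi_norm_le_iff_of_nonneg zero_le_one]
        exact hb1 n p.1 hp.1
      · rw [pi_norm_le_iff_of_nonneg zero_le_one]
        exact hb1 1 p.2 hp.2
    haveI : CompactSpace ({p : (Fin (n + 1) → ℂ) × (Fin 2 → ℂ) |
        (∑ i, Complex.normSq (p.1 i)) = 1 ∧ (∑ j, Complex.normSq (p.2 j)) = 1} :
        Set ((Fin (n + 1) → ℂ) × (Fin 2 → ℂ))) :=
      isCompact_iff_compactSpace.mp (Metric.isCompact_of_isClosed_isBounded hclosed hbdd)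
    have hmem : ∀ p : (Fin (n + 1) → ℂ) × (Fin 2 → ℂ),
        ((∑ i, Complex.normSq (p.1 i)) = 1 ∧ (∑ j, Complex.normSq (p.2 j)) = 1) →
        ((∑ i, Complex.normSq ((phi0 n s p).1 i)) = 1 ∧
          (∑ j, Complex.normSq ((phi0 n s p).2 j)) = 1) := by
      intro p hp
      constructor
      · rw [phi0_norm_fst n s hse2 hsn p (hzC_of p hp.2)]; exact hp.1
      · simpa [phi0, Complex.normSq_conj] using hp.2
    have hmem' : ∀ p : (Fin (n + 1) → ℂ) × (Fin 2 → ℂ),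
        ((∑ i, Complex.normSq (p.1 i)) = 1 ∧ (∑ j, Complex.normSq (p.2 j)) = 1) →
        ((∑ i, Complex.normSq ((psi0 n s p).1 i)) = 1 ∧
          (∑ j, Complex.normSq ((psi0 n s p).2 j)) = 1) := by
      intro p hp
      have hzsum : (∑ j, Complex.normSq ((psi0 n s p).2 j)) = 1 := by
        simpa [psi0, Complex.normSq_conj] using hp.2
      refine ⟨?_, hzsum⟩
      have h := phi0_norm_fst n s hse2 hsn (psi0 n s p) (hzC_of _ hzsum)
      rw [phi0_psi0 n s hse2 hsn p (hzC_of p hp.2)] at h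
      rw [← h]; exact hp.1
    refine ⟨Continuous.homeoOfEquivCompactToT2
      (f := { toFun := fun x => ⟨phi0 n s x.1, hmem x.1 x.2⟩
              invFun := fun x => ⟨psi0 n s x.1, hmem' x.1 x.2⟩
              left_inv := fun x => Subtype.ext (psi0_phi0 n s hse2 hsn x.1 (hzC_of x.1 x.2.2))
              right_inv := fun x => Subtype.ext (phi0_psi0 n s hse2 hsn x.1 (hzC_of x.1 x.2.2)) })
      (Continuous.subtype_mk ((phi0_continuous n s).comp continuous_subtype_val) _), ?_⟩
    intro x
    rw [hφ0]
    rfl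
  · -- equivariance
    intro t1 t2 x
    have m1 : (t1 : ℂ) * starRingEnd ℂ (t1 : ℂ) = 1 := by
      rw [Complex.mul_conj, Circle.normSq_coe, Complex.ofReal_one]
    have m2 : (t2 : ℂ) * starRingEnd ℂ (t2 : ℂ) = 1 := by
      rw [Complex.mul_conj, Circle.normSq_coe, Complex.ofReal_one]
    rw [hφ, hφ, hμ, hμ']
    refine Prod.ext ?_ ?_
    · funext i
      by_cases h1 : i.1 < s
      · rcases Nat.mod_two_eq_zero_or_one i.1 with hp | hp
        · have hi1 : i.1 + 1 < s := by omega
          have hi1n : i.1 + 1 < n + 1 := by omega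
          simp only [if_pos h1, if_pos hp, extCoord_lt n _ hi1n, if_pos hi1,
            Circle.coe_inv_eq_conj, map_mul, map_pow, Fin.isValue, Fin.val_zero,
            Fin.val_one, reduceIte, Nat.one_ne_zero, eq_self_iff_true, if_true, if_false]
          linear_combination (starRingEnd ℂ (x.2 0) * x.1 i * starRingEnd ℂ (t1 : ℂ)
              * starRingEnd ℂ (t2 : ℂ) * (t2 : ℂ)) * m1
            + (starRingEnd ℂ (x.2 0) * x.1 i * starRingEnd ℂ (t1 : ℂ)
              + x.2 1 * starRingEnd ℂ (x.1 ⟨i.1 + 1, hi1n⟩) * starRingEnd ℂ (t1 : ℂ)) * m2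
        · have h0 : i.1 - 1 < s := by omega
          have h0n : i.1 - 1 < n + 1 := by omega
          have hne : ¬(i.1 % 2 = 0) := by omega
          simp only [if_pos h1, if_neg hne, extCoord_lt n _ h0n, if_pos h0,
            Circle.coe_inv_eq_conj, map_mul, map_pow, map_neg, Fin.isValue, Fin.val_zero,
            Fin.val_one, reduceIte, Nat.one_ne_zero, eq_self_iff_true, if_true, if_false]
          linear_combination (starRingEnd ℂ (x.2 0) * x.1 i * starRingEnd ℂ (t1 : ℂ)
              * starRingEnd ℂ (t2 : ℂ) * (t2 : ℂ)) * m1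
            + (starRingEnd ℂ (x.2 0) * x.1 i * starRingEnd ℂ (t1 : ℂ)
              - x.2 1 * starRingEnd ℂ (x.1 ⟨i.1 - 1, h0n⟩) * starRingEnd ℂ (t1 : ℂ)) * m2
      · simp only [if_neg h1, Circle.coe_inv_eq_conj, map_mul]
    · funext j
      fin_cases j
      · simp only [Fin.isValue, Fin.val_zero, Fin.val_one, reduceIte, Nat.one_ne_zero,
          eq_self_iff_true, if_true, if_false, Circle.coe_inv_eq_conj, map_mul, map_pow]
      · simp only [Fin.isValue, Fin.val_zero, Fin.val_one, reduceIte, Nat.one_ne_zero,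
          eq_self_iff_true, if_true, if_false, Circle.coe_inv_eq_conj, map_mul]
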